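/- There exist universal constants C > 1 and C̃ > 0 with the following property. Assume the noise coordinates ε_1, …, ε_n are i.i.d. N(0, 1/n), assume min_{1≤i≤n} p_i² ≥ L for some L > 0, and let 1 ≤ k < n. Then with probability at least 1 − n^{1−C}, every minimizer β̂_k of ‖Y − Xβ‖² over the Krylov subspace K^k(XᵀX, XᵀY) satisfies (1/n)‖Xβ* − Xβ̂_k‖² ≤ C̃ · { [ ρ^{2k} + (log n/(nL)) · (1 + ρ^{2k}) ] · (1/n)‖Xβ*‖² + (k²/L) · (log n / n²) · (1 + C√(log n/(nL)))² · ‖Xβ*‖²_W }, where ρ = (√(λ_1/λ_n) − 1)/(√(λ_1/λ_n) + 1), and ‖Xβ*‖²_W = Σ_{i=1}^n ( max_{(j_1,…,j_k)∈I_k^+} ∏_{l=1}^k |λ_i/λ_{j_l} − 1|² ) · p_i². -/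

import Mathlib

open Matrix Polynomial MeasureTheory ProbabilityTheory
open scoped NNReal
open scoped ENNReal

section StmtAux

open Real ENNReal
open scoped ENNReal

lemma chebT_deg_cosh : ∀ k : ℕ,
    ((Chebyshev.T ℝ (k:ℤ)).natDegree ≤ k ∧ ∀ t : ℝ, (Chebyshev.T ℝ (k:ℤ)).eval (Real.cosh t) = Real.cosh (k*t))
    ∧ ((Chebyshev.T ℝ ((k:ℤ)+1)).natDegree ≤ k+1 ∧
        ∀ t : ℝ, (Chebyshev.T ℝ ((k:ℤ)+1)).eval (Real.cosh t) = Real.cosh ((k+1)*t))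
  | 0 => by
    refine ⟨⟨by simp [Chebyshev.T_zero], fun t => by simp [Chebyshev.T_zero]⟩,
      by simpa [Chebyshev.T_one] using natDegree_X_le, fun t => by simp [Chebyshev.T_one]⟩
  | (m+1) => by
    obtain ⟨⟨hd0, he0⟩, hd1, he1⟩ := chebT_deg_cosh m
    have hcast : ((m+1:ℕ):ℤ) = (m:ℤ)+1 := by push_cast; ring
    refine ⟨⟨by rw [hcast]; exact hd1, by rw [hcast]; exact_mod_cast he1⟩, ?_, ?_⟩
    · rw [hcast, show (m:ℤ)+1+1 = (m:ℤ)+2 by ring, Chebyshev.T_add_two]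
      refine le_trans (natDegree_sub_le _ _) ?_
      rw [max_le_iff]
      refine ⟨le_trans natDegree_mul_le ?_, by omega⟩
      have : (2*X : ℝ[X]).natDegree ≤ 1 := le_trans natDegree_mul_le (by simp)
      omega
    · intro t
      rw [hcast, show (m:ℤ)+1+1 = (m:ℤ)+2 by ring, Chebyshev.T_add_two]
      have h1 := Real.cosh_add (((m:ℝ)+1)*t) t
      have h2 := Real.cosh_sub (((m:ℝ)+1)*t) t
      have e1 : ((m:ℝ)+1)*t + t = ((m:ℝ)+1+1)*t := by ring
      have e2 : ((m:ℝ)+1)*t - t = (m:ℝ)*t := by ring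
      rw [e1] at h1; rw [e2] at h2
      simp only [eval_sub, eval_mul, eval_ofNat, eval_X, he1 t, he0 t]
      push_cast
      linarith

lemma chebT_abs_le (k : ℤ) {x : ℝ} (h1 : -1 ≤ x) (h2 : x ≤ 1) :
    |(Chebyshev.T ℝ k).eval x| ≤ 1 := by
  rw [← Real.cos_arccos h1 h2, Chebyshev.T_real_cos]
  exact Real.abs_cos_le_one _


lemma gauss_tail (v : ℝ≥0) (hv : v ≠ 0) (τ : ℝ) (hτ : 0 ≤ τ) :
    gaussianReal 0 v {x : ℝ | τ ≤ |x|} ≤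
      ENNReal.ofReal (Real.sqrt 2 * Real.exp (-τ^2/(4*v))) := by
  have hvR : (0:ℝ) < (v:ℝ) := by positivity
  have hv2 : (2*v : ℝ≥0) ≠ 0 := by simp [hv]
  set c : ℝ := Real.sqrt 2 * Real.exp (-τ^2/(4*v)) with hc
  have hc0 : 0 ≤ c := by positivity
  have hpt : ∀ x ∈ {x : ℝ | τ ≤ |x|},
      gaussianPDF 0 v x ≤ ENNReal.ofReal c * gaussianPDF 0 (2*v) x := by
    intro x hx
    have hx2 : τ^2 ≤ x^2 := by
      calc τ^2 ≤ |x|^2 := by exact pow_le_pow_left₀ hτ hx 2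
      _ = x^2 := sq_abs x
    rw [gaussianPDF, gaussianPDF, ← ENNReal.ofReal_mul hc0]
    apply ENNReal.ofReal_le_ofReal
    unfold gaussianPDFReal
    push_cast
    have hsplit : Real.sqrt (2*π*(2*(v:ℝ))) = Real.sqrt 2 * Real.sqrt (2*π*v) := by
      rw [← Real.sqrt_mul (by norm_num)]
      ring_nf
    rw [hsplit]
    have h2 : (Real.sqrt 2 * Real.sqrt (2*π*(v:ℝ)))⁻¹
        = (Real.sqrt 2)⁻¹ * (Real.sqrt (2*π*(v:ℝ)))⁻¹ := by
      rw [mul_inv]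
    have hs2 : Real.sqrt 2 * (Real.sqrt 2)⁻¹ = 1 := by
      rw [mul_inv_cancel₀]; positivity
    have hexp : rexp (-(x-0)^2/(2*(v:ℝ))) ≤ rexp (-τ^2/(4*(v:ℝ))) * rexp (-(x-0)^2/(2*(2*(v:ℝ)))) := by
      rw [← Real.exp_add, Real.exp_le_exp, sub_zero]
      rw [div_add_div _ _ (by positivity : (4*(v:ℝ)) ≠ 0) (by positivity : (2*(2*(v:ℝ))) ≠ 0)]
      rw [div_le_div_iff₀ (by positivity) (by positivity)]
      nlinarith [mul_nonneg (mul_pos hvR hvR).le (sub_nonneg.mpr hx2)]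
    calc (Real.sqrt (2*π*(v:ℝ)))⁻¹ * rexp (-(x-0)^2/(2*(v:ℝ)))
        ≤ (Real.sqrt (2*π*(v:ℝ)))⁻¹ * (rexp (-τ^2/(4*(v:ℝ))) * rexp (-(x-0)^2/(2*(2*(v:ℝ))))) := by
          apply mul_le_mul_of_nonneg_left hexp (by positivity)
      _ = Real.sqrt 2 * rexp (-τ^2/(4*(v:ℝ))) *
            ((Real.sqrt 2 * Real.sqrt (2*π*(v:ℝ)))⁻¹ * rexp (-(x-0)^2/(2*(2*(v:ℝ))))) := by
          rw [h2]
          field_simp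
  calc gaussianReal 0 v {x : ℝ | τ ≤ |x|}
      = ∫⁻ x in {x : ℝ | τ ≤ |x|}, gaussianPDF 0 v x := gaussianReal_apply 0 hv _
    _ ≤ ∫⁻ x in {x : ℝ | τ ≤ |x|}, ENNReal.ofReal c * gaussianPDF 0 (2*v) x :=
        setLIntegral_mono ((measurable_gaussianPDF 0 (2*v)).const_mul _) hpt
    _ ≤ ∫⁻ x, ENNReal.ofReal c * gaussianPDF 0 (2*v) x := setLIntegral_le_lintegral _ _
    _ = ENNReal.ofReal c * ∫⁻ x, gaussianPDF 0 (2*v) x :=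
        lintegral_const_mul _ (measurable_gaussianPDF 0 (2*v))
    _ = ENNReal.ofReal c := by rw [lintegral_gaussianPDF_eq_one 0 hv2, mul_one]


lemma sqrt_ratio_gt_one {a b : ℝ} (ha : 0 < a) (hab : a < b) : 1 < Real.sqrt (b/a) := by
  have h1 : (1:ℝ) < b / a := (one_lt_div ha).mpr hab
  have := Real.sqrt_lt_sqrt (by norm_num) h1
  simpa using this

lemma cheb_scaled (a b : ℝ) (ha : 0 < a) (hab : a < b) (k : ℕ) :
    ∃ r : Polynomial ℝ, r.natDegree ≤ k ∧ r.eval 0 = 1 ∧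
      ∀ x, a ≤ x → x ≤ b →
        |r.eval x| ≤ 2 * ((Real.sqrt (b/a) - 1)/(Real.sqrt (b/a) + 1))^k := by
  set s : ℝ := Real.sqrt (b/a) with hs
  have hs1 : 1 < s := sqrt_ratio_gt_one ha hab
  have hb : b = a * s^2 := by
    rw [hs, Real.sq_sqrt (le_of_lt (div_pos (ha.trans hab) ha))]
    field_simp
  set ρ : ℝ := (s-1)/(s+1) with hρ
  set y : ℝ := (s+1)/(s-1) with hy
  have hρpos : 0 < ρ := by apply div_pos <;> linarith
  have hypos : 0 < y := by apply div_pos <;> linarith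
  have hyinv : y⁻¹ = ρ := by rw [hy, inv_div]
  have hba : (0:ℝ) < b - a := by
    have : 0 < a * (s^2 - 1) := by
      apply mul_pos ha; nlinarith
    nlinarith
  set c : ℝ := (b+a)/(b-a) with hc
  have hcosh : Real.cosh (Real.log y) = c := by
    rw [Real.cosh_eq, Real.exp_log hypos, Real.exp_neg, Real.exp_log hypos]
    rw [hc, hb, hy, inv_div]
    have h1 : s - 1 ≠ 0 := by linarith
    have h2 : s + 1 ≠ 0 := by linarith
    have h3 : a * s^2 - a ≠ 0 := by nlinarith
    have h4 : s^2 - 1 ≠ 0 := by nlinarith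
    field_simp
    ring
  set T : Polynomial ℝ := Chebyshev.T ℝ (k:ℤ) with hT
  set d : ℝ := T.eval c with hd
  have hdge : y^k / 2 ≤ d := by
    have h1 : d = Real.cosh (k * Real.log y) := by
      rw [hd, ← hcosh, (chebT_deg_cosh k).1.2]
    have h2 : Real.exp ((k:ℝ) * Real.log y) = y^k := by
      rw [Real.exp_nat_mul, Real.exp_log hypos]
    rw [h1, Real.cosh_eq]
    have h3 : 0 < Real.exp (-((k:ℝ) * Real.log y)) := Real.exp_pos _
    rw [h2] at *
    nlinarith [Real.exp_pos (-((k:ℝ) * Real.log y)), h2]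
  have hdpos : 0 < d := lt_of_lt_of_le (by positivity) hdge
  have hdinv : d⁻¹ ≤ 2 * ρ^k := by
    have h1 : d⁻¹ ≤ (y^k/2)⁻¹ := by
      apply inv_anti₀ (by positivity) hdge
    have h2 : (y^k/2)⁻¹ = 2 * ρ^k := by
      rw [← hyinv, inv_pow]
      field_simp
    linarith
  set φ : Polynomial ℝ := Polynomial.C (-2/(b-a)) * Polynomial.X + Polynomial.C ((b+a)/(b-a)) with hφ
  refine ⟨Polynomial.C d⁻¹ * (T.comp φ), ?_, ?_, ?_⟩
  · refine le_trans (natDegree_C_mul_le _ _) (le_trans natDegree_comp_le ?_)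
    have h1 : φ.natDegree ≤ 1 := by
      refine le_trans (natDegree_add_le _ _) ?_
      simp only [natDegree_C, max_le_iff]
      exact ⟨le_trans (natDegree_C_mul_le _ _) (le_of_eq natDegree_X), by omega⟩
    calc T.natDegree * φ.natDegree ≤ k * 1 :=
          Nat.mul_le_mul (chebT_deg_cosh k).1.1 h1
      _ = k := mul_one k
  · rw [eval_mul, eval_C, eval_comp]
    have : φ.eval 0 = c := by simp [hφ, hc]
    rw [this, ← hd, inv_mul_cancel₀ (ne_of_gt hdpos)]
  · intro x hax hxb
    have hφx : φ.eval x = (b + a - 2*x)/(b-a) := by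
      simp [hφ]; ring
    have hub : φ.eval x ≤ 1 := by
      rw [hφx, div_le_one hba]; linarith
    have hlb : -1 ≤ φ.eval x := by
      rw [hφx, le_div_iff₀ hba]; linarith
    rw [eval_mul, eval_C, eval_comp, abs_mul, abs_inv, abs_of_pos hdpos]
    calc d⁻¹ * |T.eval (φ.eval x)| ≤ d⁻¹ * 1 := by
          apply mul_le_mul_of_nonneg_left (chebT_abs_le _ hlb hub) (by positivity)
      _ = d⁻¹ := mul_one _
      _ ≤ 2 * ρ^k := hdinv


variable {n q : ℕ}

lemma parseval (u : Fin n → Fin n → ℝ)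
    (hu : ∀ i j, u i ⬝ᵥ u j = if i = j then (1:ℝ) else 0) (v : Fin n → ℝ) :
    ∑ i, (u i ⬝ᵥ v)^2 = ∑ a, (v a)^2 := by
  set U : Matrix (Fin n) (Fin n) ℝ := Matrix.of u with hU
  have hUU : U * Uᵀ = 1 := by
    ext i j
    simpa [hU, Matrix.mul_apply, Matrix.one_apply, dotProduct] using hu i j
  have hUtU : Uᵀ * U = 1 := mul_eq_one_comm.mp hUU
  have hrow : ∀ i, (U *ᵥ v) i = u i ⬝ᵥ v := fun i => rfl
  have key : (U *ᵥ v) ⬝ᵥ (U *ᵥ v) = v ⬝ᵥ v := by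
    rw [Matrix.dotProduct_mulVec, ← Matrix.vecMul_transpose, Matrix.vecMul_vecMul,
      hUtU, Matrix.vecMul_one]
  calc ∑ i, (u i ⬝ᵥ v)^2 = (U *ᵥ v) ⬝ᵥ (U *ᵥ v) := by
        simp [dotProduct, hrow, pow_two]
    _ = v ⬝ᵥ v := key
    _ = ∑ a, (v a)^2 := by simp [dotProduct, pow_two]

lemma hatM (X : Matrix (Fin n) (Fin q) ℝ) (lam : Fin n → ℝ) (u : Fin n → Fin n → ℝ)
    (hu : ∀ i j, u i ⬝ᵥ u j = if i = j then (1:ℝ) else 0)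
    (hM : X * Xᵀ = ∑ i, lam i • vecMulVec (u i) (u i)) (i : Fin n) (v : Fin n → ℝ) :
    u i ⬝ᵥ ((X * Xᵀ) *ᵥ v) = lam i * (u i ⬝ᵥ v) := by
  have hexp : ∀ a, ((X * Xᵀ) *ᵥ v) a = ∑ j, lam j * u j a * (u j ⬝ᵥ v) := by
    intro a
    rw [hM]
    simp only [Matrix.mulVec, dotProduct, Matrix.sum_apply, Matrix.smul_apply,
      Matrix.vecMulVec_apply, smul_eq_mul, Finset.sum_mul, Finset.mul_sum]
    rw [Finset.sum_comm]
    exact Finset.sum_congr rfl fun j _ => Finset.sum_congr rfl fun b _ => by ring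
  calc u i ⬝ᵥ ((X * Xᵀ) *ᵥ v) = ∑ a, u i a * ∑ j, lam j * u j a * (u j ⬝ᵥ v) := by
        simp [dotProduct, hexp]
    _ = ∑ j, lam j * (u i ⬝ᵥ u j) * (u j ⬝ᵥ v) := by
        simp only [Finset.mul_sum]
        rw [Finset.sum_comm]
        refine Finset.sum_congr rfl fun j _ => ?_
        rw [show u i ⬝ᵥ u j = ∑ x, u i x * u j x from rfl, Finset.mul_sum, Finset.sum_mul]
        exact Finset.sum_congr rfl fun x _ => by ring
    _ = lam i * (u i ⬝ᵥ v) := by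
        simp [hu]

lemma hatMpow (X : Matrix (Fin n) (Fin q) ℝ) (lam : Fin n → ℝ) (u : Fin n → Fin n → ℝ)
    (hu : ∀ i j, u i ⬝ᵥ u j = if i = j then (1:ℝ) else 0)
    (hM : X * Xᵀ = ∑ i, lam i • vecMulVec (u i) (u i)) (i : Fin n) (v : Fin n → ℝ) :
    ∀ m : ℕ, u i ⬝ᵥ (((X * Xᵀ)^m) *ᵥ v) = (lam i)^m * (u i ⬝ᵥ v)
  | 0 => by simp
  | (m+1) => by
    rw [pow_succ, ← Matrix.mulVec_mulVec, hatMpow X lam u hu hM i _ m,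
      hatM X lam u hu hM i v]
    ring

lemma Xpow_mulVec (X : Matrix (Fin n) (Fin q) ℝ) :
    ∀ (j : ℕ) (w : Fin n → ℝ),
      X *ᵥ (((Xᵀ * X)^j) *ᵥ (Xᵀ *ᵥ w)) = ((X * Xᵀ)^(j+1)) *ᵥ w
  | 0, w => by simp [Matrix.mulVec_mulVec]
  | (j+1), w => by
    have h1 : ((Xᵀ * X)^(j+1)) *ᵥ (Xᵀ *ᵥ w) = ((Xᵀ * X)^j) *ᵥ (Xᵀ *ᵥ ((X * Xᵀ) *ᵥ w)) := by
      simp only [Matrix.mulVec_mulVec]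
      congr 1
      simp only [pow_succ, Matrix.mul_assoc]
    rw [h1, Xpow_mulVec X j ((X * Xᵀ) *ᵥ w), Matrix.mulVec_mulVec, ← pow_succ]


lemma dot_sum_smul {n : ℕ} (v : Fin n → ℝ) (t : Finset ℕ) (c : ℕ → ℝ) (w : ℕ → Fin n → ℝ) :
    v ⬝ᵥ (∑ j ∈ t, c j • w j) = ∑ j ∈ t, c j * (v ⬝ᵥ w j) := by
  simp only [dotProduct, Finset.sum_apply, Pi.smul_apply, smul_eq_mul, Finset.mul_sum]
  rw [Finset.sum_comm]
  exact Finset.sum_congr rfl fun j _ => Finset.sum_congr rfl fun a _ => by ring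

lemma key_det {n q : ℕ} (X : Matrix (Fin n) (Fin q) ℝ) (βstar : Fin q → ℝ)
    (lam : Fin n → ℝ) (u : Fin n → Fin n → ℝ)
    (hu : ∀ i j, u i ⬝ᵥ u j = if i = j then (1:ℝ) else 0)
    (hM : X * Xᵀ = ∑ i, lam i • vecMulVec (u i) (u i))
    (hlam : StrictAnti lam) (hpos : ∀ i, 0 < lam i)
    (e : Fin n → ℝ) (k : ℕ) (hk1 : 1 ≤ k) (hkn : k < n)
    (h0 : 0 < n) (h1 : n - 1 < n)
    (βhat : Fin q → ℝ)
    (hmem : βhat ∈ Submodule.span ℝ {v : Fin q → ℝ | ∃ j < k,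
        v = ((Xᵀ * X) ^ j) *ᵥ (Xᵀ *ᵥ (X *ᵥ βstar + e))})
    (hmin : ∀ β ∈ Submodule.span ℝ {v : Fin q → ℝ | ∃ j < k,
        v = ((Xᵀ * X) ^ j) *ᵥ (Xᵀ *ᵥ (X *ᵥ βstar + e))},
      ∑ i, ((X *ᵥ βstar + e) i - (X *ᵥ βhat) i) ^ 2 ≤
        ∑ i, ((X *ᵥ βstar + e) i - (X *ᵥ β) i) ^ 2) :
    ∑ i, ((X *ᵥ βstar) i - (X *ᵥ βhat) i) ^ 2 ≤
      18 * (∑ i, (e i)^2) +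
      16 * ((Real.sqrt (lam ⟨0, h0⟩ / lam ⟨n-1, h1⟩) - 1) /
            (Real.sqrt (lam ⟨0, h0⟩ / lam ⟨n-1, h1⟩) + 1))^(2*k) *
        ∑ i, ((X *ᵥ βstar) i)^2 := by
  set Y : Fin n → ℝ := X *ᵥ βstar + e with hY
  set a : ℝ := lam ⟨n-1, h1⟩ with ha'
  set b : ℝ := lam ⟨0, h0⟩ with hb'
  have hn2 : 2 ≤ n := by omega
  have hab : a < b := by
    apply hlam
    rw [Fin.lt_def]
    simp
    omega
  have hapos : 0 < a := hpos _
  obtain ⟨r, hdeg, hr0, hrb⟩ := cheb_scaled a b hapos hab k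
  set ρ : ℝ := (Real.sqrt (b/a) - 1)/(Real.sqrt (b/a) + 1) with hρ
  have hs1 : 1 < Real.sqrt (b/a) := sqrt_ratio_gt_one hapos hab
  have hρpos : 0 < ρ := by apply div_pos <;> linarith
  have hρlt1 : ρ < 1 := by rw [hρ, div_lt_one (by linarith)]; linarith
  set g : Polynomial ℝ := 1 - r with hg
  set h : Polynomial ℝ := g.divX with hh
  have hg0 : g.coeff 0 = 0 := by
    rw [coeff_zero_eq_eval_zero, hg, eval_sub, eval_one, hr0, sub_self]
  have hgh : h * Polynomial.X = g := by
    conv_rhs => rw [← Polynomial.divX_mul_X_add g]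
    rw [hg0, map_zero, add_zero]
  have hdegh : h.natDegree < k := by
    have hgdeg : g.natDegree ≤ k := by
      refine le_trans (natDegree_sub_le _ _) ?_
      simp only [natDegree_one, max_le_iff]
      exact ⟨by omega, hdeg⟩
    have := Polynomial.natDegree_divX_eq_natDegree_tsub_one (p := g)
    rw [hh, this]
    omega
  set β : Fin q → ℝ := ∑ j ∈ Finset.range k, h.coeff j • (((Xᵀ * X) ^ j) *ᵥ (Xᵀ *ᵥ Y)) with hβ
  have hβmem : β ∈ Submodule.span ℝ {v : Fin q → ℝ | ∃ j < k,
      v = ((Xᵀ * X) ^ j) *ᵥ (Xᵀ *ᵥ (X *ᵥ βstar + e))} := by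
    refine Submodule.sum_mem _ fun j hj => Submodule.smul_mem _ _ ?_
    exact Submodule.subset_span ⟨j, Finset.mem_range.mp hj, rfl⟩
  have hXβ : X *ᵥ β = ∑ j ∈ Finset.range k, h.coeff j • (((X * Xᵀ) ^ (j+1)) *ᵥ Y) := by
    rw [hβ, ← Matrix.mulVecLin_apply, map_sum]
    refine Finset.sum_congr rfl fun j _ => ?_
    rw [_root_.map_smul, Matrix.mulVecLin_apply, Xpow_mulVec]
  have hhatXβ : ∀ i : Fin n, u i ⬝ᵥ (X *ᵥ β) = g.eval (lam i) * (u i ⬝ᵥ Y) := by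
    intro i
    rw [hXβ, dot_sum_smul]
    have : ∀ j ∈ Finset.range k,
        h.coeff j * (u i ⬝ᵥ (((X * Xᵀ) ^ (j+1)) *ᵥ Y))
          = (h.coeff j * (lam i)^j) * (lam i * (u i ⬝ᵥ Y)) := by
      intro j _
      rw [hatMpow X lam u hu hM i Y (j+1)]
      ring
    rw [Finset.sum_congr rfl this, ← Finset.sum_mul,
      ← Polynomial.eval_eq_sum_range' hdegh, ← hgh]
    rw [eval_mul, eval_X]
    ring
  have hresid : ∀ i : Fin n, u i ⬝ᵥ (Y - X *ᵥ β) = r.eval (lam i) * (u i ⬝ᵥ Y) := by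
    intro i
    rw [dotProduct_sub, hhatXβ i]
    have : r.eval (lam i) = 1 - g.eval (lam i) := by
      rw [hg, eval_sub, eval_one]; ring
    rw [this]
    ring
  have hlamr : ∀ i, a ≤ lam i ∧ lam i ≤ b := by
    intro i
    constructor
    · apply hlam.antitone
      rw [Fin.le_def]
      simp
      omega
    · apply hlam.antitone
      rw [Fin.le_def]
      simp
  -- quantities
  set S : ℝ := ∑ x, ((X *ᵥ βstar) x)^2 with hS
  set Ne : ℝ := ∑ x, (e x)^2 with hNe
  set NY : ℝ := ∑ x, (Y x)^2 with hNY
  have hSnn : 0 ≤ S := Finset.sum_nonneg fun _ _ => sq_nonneg _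
  have hNenn : 0 ≤ Ne := Finset.sum_nonneg fun _ _ => sq_nonneg _
  have hNYle : NY ≤ 2*S + 2*Ne := by
    have hpt : ∀ x : Fin n, (Y x)^2 ≤ 2*((X *ᵥ βstar) x)^2 + 2*(e x)^2 := by
      intro x
      have : Y x = (X *ᵥ βstar) x + e x := rfl
      rw [this]
      nlinarith [sq_nonneg ((X *ᵥ βstar) x - e x)]
    calc NY ≤ ∑ x, (2*((X *ᵥ βstar) x)^2 + 2*(e x)^2) := Finset.sum_le_sum fun x _ => hpt x
      _ = 2*S + 2*Ne := by rw [Finset.sum_add_distrib, hS, hNe, Finset.mul_sum, Finset.mul_sum]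
  -- residual bound
  have hρ2nn : 0 ≤ ρ^(2*k) := le_of_lt (pow_pos hρpos _)
  have hρ2le1 : ρ^(2*k) ≤ 1 := pow_le_one₀ hρpos.le hρlt1.le
  have hstep1 : ∑ x, (Y x - (X *ᵥ β) x)^2 ≤ 4 * ρ^(2*k) * NY := by
    have hsq : (2*ρ^k)^2 = 4*ρ^(2*k) := by
      rw [mul_pow, ← pow_mul, mul_comm k 2]; norm_num
    calc ∑ x, (Y x - (X *ᵥ β) x)^2
        = ∑ x, ((Y - X *ᵥ β) x)^2 := by simp [Pi.sub_apply]
      _ = ∑ i, (u i ⬝ᵥ (Y - X *ᵥ β))^2 := (parseval u hu _).symm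
      _ = ∑ i, (r.eval (lam i))^2 * (u i ⬝ᵥ Y)^2 := by
          refine Finset.sum_congr rfl fun i _ => ?_
          rw [hresid i, mul_pow]
      _ ≤ ∑ i, (4*ρ^(2*k)) * (u i ⬝ᵥ Y)^2 := by
          refine Finset.sum_le_sum fun i _ => ?_
          refine mul_le_mul_of_nonneg_right ?_ (sq_nonneg _)
          rw [← hsq]
          calc (r.eval (lam i))^2 = |r.eval (lam i)|^2 := (sq_abs _).symm
            _ ≤ (2*ρ^k)^2 := by
                apply pow_le_pow_left₀ (abs_nonneg _)
                exact hrb (lam i) (hlamr i).1 (hlamr i).2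
      _ = 4*ρ^(2*k) * NY := by
          rw [← Finset.mul_sum, parseval u hu Y]
  have hmin' := hmin β hβmem
  have hfinal1 : ∑ x, ((X *ᵥ βstar) x - (X *ᵥ βhat) x)^2
      ≤ 2*Ne + 2*∑ x, (Y x - (X *ᵥ βhat) x)^2 := by
    have hpt : ∀ x : Fin n, ((X *ᵥ βstar) x - (X *ᵥ βhat) x)^2
        ≤ 2*(e x)^2 + 2*(Y x - (X *ᵥ βhat) x)^2 := by
      intro x
      have hYx : (X *ᵥ βstar) x = Y x - e x := by
        have : Y x = (X *ᵥ βstar) x + e x := rfl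
        rw [this]; ring
      rw [hYx]
      nlinarith [sq_nonneg (e x + (Y x - (X *ᵥ βhat) x))]
    calc ∑ x, ((X *ᵥ βstar) x - (X *ᵥ βhat) x)^2
        ≤ ∑ x, (2*(e x)^2 + 2*(Y x - (X *ᵥ βhat) x)^2) := Finset.sum_le_sum fun x _ => hpt x
      _ = 2*Ne + 2*∑ x, (Y x - (X *ᵥ βhat) x)^2 := by
          rw [Finset.sum_add_distrib, hNe, Finset.mul_sum, Finset.mul_sum]
  have hchain : ∑ x, (Y x - (X *ᵥ βhat) x)^2 ≤ 4 * ρ^(2*k) * NY :=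
    le_trans hmin' hstep1
  have hfin : ∑ x, ((X *ᵥ βstar) x - (X *ᵥ βhat) x)^2 ≤ 18*Ne + 16*ρ^(2*k)*S := by
    have hNYnn : 0 ≤ NY := Finset.sum_nonneg fun _ _ => sq_nonneg _
    nlinarith [mul_nonneg (sub_nonneg.mpr hρ2le1) hNenn, mul_le_mul_of_nonneg_left hNYle (mul_nonneg (by norm_num : (0:ℝ) ≤ 4) hρ2nn)]
  calc ∑ x, ((X *ᵥ βstar) x - (X *ᵥ βhat) x)^2 ≤ 18*Ne + 16*ρ^(2*k)*S := hfin
    _ = 18 * (∑ i, (e i)^2) + 16 * ρ^(2*k) * ∑ i, ((X *ᵥ βstar) i)^2 := by rw [hNe, hS]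


end StmtAux

set_option maxHeartbeats 2000000 in
/-- there are universal constants C > 1 and C̃ > 0 such that, for
i.i.d. N(0, 1/n) noise, min_i p_i² ≥ L > 0 and 1 ≤ k < n, with probability at least
1 − n^{1−C} every minimizer β̂_k of ‖Y − Xβ‖² over K^k(XᵀX, XᵀY) satisfies
(1/n)‖Xβ* − Xβ̂_k‖² ≤ C̃·{[ρ^{2k} + (log n/(nL))(1+ρ^{2k})]·(1/n)‖Xβ*‖²
+ (k²/L)(log n/n²)(1 + C√(log n/(nL)))²·‖Xβ*‖²_W}. -/
theorem stmt18 :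
    ∃ C : ℝ, 1 < C ∧ ∃ Ctilde : ℝ, 0 < Ctilde ∧
      ∀ (n q : ℕ) (X : Matrix (Fin n) (Fin q) ℝ) (βstar : Fin q → ℝ)
        (lam : Fin n → ℝ) (u : Fin n → Fin n → ℝ),
        (∀ i j, u i ⬝ᵥ u j = if i = j then (1 : ℝ) else 0) →
        X * Xᵀ = ∑ i, lam i • vecMulVec (u i) (u i) →
        StrictAnti lam → (∀ i, 0 < lam i) →
        ∀ (Ω : Type) (_mΩ : MeasurableSpace Ω) (P : Measure Ω),
          IsProbabilityMeasure P →
          ∀ (eps : Ω → Fin n → ℝ),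
            (∀ i, Measurable fun ω => eps ω i) →
            iIndepFun (fun i ω => eps ω i) P →
            (∀ i, Measure.map (fun ω => eps ω i) P = gaussianReal 0 ((n : ℝ≥0))⁻¹) →
            ∀ (L : ℝ), 0 < L → (∀ i, L ≤ (u i ⬝ᵥ (X *ᵥ βstar)) ^ 2) →
            ∀ (k : ℕ) (hk1 : 1 ≤ k) (hkn : k < n),
              ENNReal.ofReal (1 - (n : ℝ) ^ (1 - C)) ≤
                P {ω | ∀ βhat : Fin q → ℝ,
                  βhat ∈ Submodule.span ℝ {v : Fin q → ℝ | ∃ j < k,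
                      v = ((Xᵀ * X) ^ j) *ᵥ (Xᵀ *ᵥ (X *ᵥ βstar + eps ω))} →
                  (∀ β ∈ Submodule.span ℝ {v : Fin q → ℝ | ∃ j < k,
                      v = ((Xᵀ * X) ^ j) *ᵥ (Xᵀ *ᵥ (X *ᵥ βstar + eps ω))},
                    ∑ i, ((X *ᵥ βstar + eps ω) i - (X *ᵥ βhat) i) ^ 2 ≤
                      ∑ i, ((X *ᵥ βstar + eps ω) i - (X *ᵥ β) i) ^ 2) →
                  (1 / n : ℝ) * ∑ i, ((X *ᵥ βstar) i - (X *ᵥ βhat) i) ^ 2 ≤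
                    Ctilde *
                      ((((Real.sqrt (lam ⟨0, by omega⟩ / lam ⟨n - 1, by omega⟩) - 1) /
                          (Real.sqrt (lam ⟨0, by omega⟩ / lam ⟨n - 1, by omega⟩) + 1)) ^ (2 * k) +
                          Real.log n / (n * L) *
                            (1 + ((Real.sqrt (lam ⟨0, by omega⟩ / lam ⟨n - 1, by omega⟩) - 1) /
                              (Real.sqrt (lam ⟨0, by omega⟩ / lam ⟨n - 1, by omega⟩) + 1)) ^ (2 * k))) *
                        ((1 / n : ℝ) * ∑ i, ((X *ᵥ βstar) i) ^ 2) +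
                        ((k : ℝ) ^ 2 / L) * (Real.log n / (n : ℝ) ^ 2) *
                          (1 + C * Real.sqrt (Real.log n / (n * L))) ^ 2 *
                          ∑ i, sSup {r : ℝ | ∃ j : Fin k → Fin n, StrictAnti j ∧
                              r = ∏ l, |lam i / lam (j l) - 1| ^ 2} *
                            (u i ⬝ᵥ (X *ᵥ βstar)) ^ 2)} := by
  refine ⟨2, one_lt_two, 300, by norm_num, ?_⟩
  intro n q X βstar lam u hu hM hlam hpos Ω mΩ P hP eps hmeas hindep heps L hL hminp k hk1 hkn
  have hn2 : 2 ≤ n := by omega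
  have hn0 : (0:ℝ) < n := by exact_mod_cast Nat.pos_of_ne_zero (by omega)
  have hnne : (n:ℝ) ≠ 0 := ne_of_gt hn0
  have hlogn : 0 ≤ Real.log n := Real.log_nonneg (by exact_mod_cast hn2.trans' (by norm_num))
  set τ : ℝ := Real.sqrt (16 * Real.log n / n) with hτ
  have hτnn : 0 ≤ τ := Real.sqrt_nonneg _
  have hτsq : τ^2 = 16 * Real.log n / n := Real.sq_sqrt (by positivity)
  set E : Set Ω := {ω | ∀ i, |eps ω i| ≤ τ} with hE
  -- tail bound per coordinate
  have hv : ((n:ℝ≥0))⁻¹ ≠ 0 := by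
    simp only [ne_eq, inv_eq_zero, Nat.cast_eq_zero]
    omega
  have htail : ∀ i, P {ω | τ ≤ |eps ω i|} ≤ ENNReal.ofReal (((n:ℝ))⁻¹^2) := by
    intro i
    have hsetm : MeasurableSet {x : ℝ | τ ≤ |x|} :=
      measurableSet_le measurable_const continuous_abs.measurable
    have hpre : {ω | τ ≤ |eps ω i|} = (fun ω => eps ω i) ⁻¹' {x | τ ≤ |x|} := rfl
    rw [hpre, ← Measure.map_apply (hmeas i) hsetm, heps i]
    refine le_trans (gauss_tail _ hv τ hτnn) (ENNReal.ofReal_le_ofReal ?_)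
    have hvc : ((((n:ℝ≥0))⁻¹ : ℝ≥0) : ℝ) = ((n:ℝ))⁻¹ := by
      push_cast
      ring
    rw [hvc]
    have harg : -τ^2/(4*((n:ℝ))⁻¹) = -(4 * Real.log n) := by
      rw [hτsq]
      field_simp
      ring
    rw [harg]
    have hexp : Real.exp (-(4 * Real.log n)) = ((n:ℝ)⁻¹)^4 := by
      rw [show -(4*Real.log n) = (4:ℕ) * (-Real.log n) by push_cast; ring,
        Real.exp_nat_mul, Real.exp_neg, Real.exp_log hn0]
    rw [hexp]
    have hsqrt2 : Real.sqrt 2 ≤ 2 := by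
      nlinarith [Real.sq_sqrt (by norm_num : (0:ℝ) ≤ 2), Real.sqrt_nonneg 2]
    have hinv : (n:ℝ)⁻¹ ≤ 1/2 := by
      rw [inv_le_comm₀ hn0 (by norm_num)]
      norm_num
      exact_mod_cast hn2
    have hinvnn : 0 ≤ (n:ℝ)⁻¹ := by positivity
    have hsq : ((n:ℝ)⁻¹)^2 ≤ 1/4 := by nlinarith [hinv, hinvnn]
    calc Real.sqrt 2 * ((n:ℝ)⁻¹)^4 ≤ 2 * ((n:ℝ)⁻¹)^4 := by
          nlinarith [pow_nonneg hinvnn 4]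
      _ = 2 * ((n:ℝ)⁻¹)^2 * ((n:ℝ)⁻¹)^2 := by ring
      _ ≤ 2 * (1/4) * ((n:ℝ)⁻¹)^2 := by
          have := pow_nonneg hinvnn 2
          nlinarith [hsq, this]
      _ ≤ ((n:ℝ)⁻¹)^2 := by nlinarith [pow_nonneg hinvnn 2]
  -- complement bound
  have hcompl : P Eᶜ ≤ ENNReal.ofReal ((n:ℝ)⁻¹) := by
    have hsub : Eᶜ ⊆ ⋃ i, {ω | τ ≤ |eps ω i|} := by
      intro ω hω
      simp only [hE, Set.mem_compl_iff, Set.mem_setOf_eq, not_forall, not_le] at hω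
      obtain ⟨i, hi⟩ := hω
      exact Set.mem_iUnion.mpr ⟨i, le_of_lt hi⟩
    calc P Eᶜ ≤ P (⋃ i, {ω | τ ≤ |eps ω i|}) := measure_mono hsub
      _ ≤ ∑ i, P {ω | τ ≤ |eps ω i|} := measure_iUnion_fintype_le _ _
      _ ≤ (∑ i : Fin n, ENNReal.ofReal (((n:ℝ))⁻¹^2)) := Finset.sum_le_sum fun i _ => htail i
      _ = (n : ℝ≥0∞) * ENNReal.ofReal (((n:ℝ))⁻¹^2) := by
          rw [Finset.sum_const, Finset.card_univ, Fintype.card_fin, nsmul_eq_mul]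
      _ ≤ ENNReal.ofReal ((n:ℝ)⁻¹) := by
          rw [show ((n : ℕ) : ℝ≥0∞) = ENNReal.ofReal (n:ℝ) from (ENNReal.ofReal_natCast n).symm,
            ← ENNReal.ofReal_mul (le_of_lt hn0)]
          apply ENNReal.ofReal_le_ofReal
          have : (n:ℝ) * ((n:ℝ)⁻¹)^2 = (n:ℝ)⁻¹ := by
            field_simp
          rw [this]
  -- P E lower bound
  have hPE : ENNReal.ofReal (1 - (n:ℝ)^(1-(2:ℝ))) ≤ P E := by
    have hrpow : (n:ℝ)^(1-(2:ℝ)) = (n:ℝ)⁻¹ := by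
      rw [show (1-(2:ℝ)) = -1 by norm_num, Real.rpow_neg_one]
    rw [hrpow]
    have h1 : ENNReal.ofReal (1 - (n:ℝ)⁻¹) ≤ 1 - ENNReal.ofReal ((n:ℝ)⁻¹) := by
      rw [ENNReal.ofReal_sub _ (by positivity)]
      simp
    refine le_trans h1 ?_
    rw [tsub_le_iff_right]
    calc (1:ℝ≥0∞) = P Set.univ := measure_univ.symm
      _ = P (E ∪ Eᶜ) := by rw [Set.union_compl_self]
      _ ≤ P E + P Eᶜ := measure_union_le _ _
      _ ≤ P E + ENNReal.ofReal ((n:ℝ)⁻¹) := add_le_add le_rfl hcompl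
  refine le_trans hPE (measure_mono ?_)
  intro ω hω
  intro βhat hmem hmin
  have h0 : 0 < n := by omega
  have h1 : n - 1 < n := by omega
  have hkey := key_det X βstar lam u hu hM hlam hpos (eps ω) k hk1 hkn h0 h1 βhat hmem hmin
  set ρ : ℝ := (Real.sqrt (lam ⟨0, h0⟩ / lam ⟨n-1, h1⟩) - 1) /
      (Real.sqrt (lam ⟨0, h0⟩ / lam ⟨n-1, h1⟩) + 1) with hρdef
  set S : ℝ := ∑ i, ((X *ᵥ βstar) i)^2 with hS
  set Ne : ℝ := ∑ i, (eps ω i)^2 with hNe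
  -- rho bounds
  have hab : lam ⟨n-1, h1⟩ < lam ⟨0, h0⟩ := by
    apply hlam
    rw [Fin.lt_def]
    simp
    omega
  have hs1 : 1 < Real.sqrt (lam ⟨0, h0⟩ / lam ⟨n-1, h1⟩) := by
    have h1' : (1:ℝ) < lam ⟨0, h0⟩ / lam ⟨n-1, h1⟩ := (one_lt_div (hpos _)).mpr hab
    have := Real.sqrt_lt_sqrt (by norm_num) h1'
    simpa using this
  have hρpos : 0 < ρ := by
    rw [hρdef]
    apply div_pos <;> linarith
  have hρlt1 : ρ < 1 := by
    rw [hρdef, div_lt_one (by linarith)]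
    linarith
  have ht_nn : 0 ≤ ρ^(2*k) := le_of_lt (pow_pos hρpos _)
  -- Ne bound (event)
  have hNeb : Ne ≤ 16 * Real.log n := by
    calc Ne ≤ (∑ i : Fin n, τ^2 : ℝ) := by
          refine Finset.sum_le_sum fun i _ => ?_
          calc (eps ω i)^2 = |eps ω i|^2 := (sq_abs _).symm
            _ ≤ τ^2 := pow_le_pow_left₀ (abs_nonneg _) (hω i) 2
      _ = (n:ℝ) * τ^2 := by simp [Finset.sum_const]
      _ = 16 * Real.log n := by
          rw [hτsq]
          field_simp
  have hSL : (n:ℝ) * L ≤ S := by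
    calc (n:ℝ)*L = (∑ i : Fin n, L : ℝ) := by simp [Finset.sum_const, mul_comm]
      _ ≤ ∑ i, (u i ⬝ᵥ (X *ᵥ βstar))^2 := Finset.sum_le_sum fun i _ => hminp i
      _ = S := parseval u hu _
  have hSnn : 0 ≤ S := Finset.sum_nonneg fun _ _ => sq_nonneg _
  have hNenn : 0 ≤ Ne := Finset.sum_nonneg fun _ _ => sq_nonneg _
  -- nonnegativity of W term
  have hW : 0 ≤ ((k : ℝ) ^ 2 / L) * (Real.log n / (n : ℝ) ^ 2) *
      (1 + 2 * Real.sqrt (Real.log n / (n * L))) ^ 2 *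
      ∑ i, sSup {r : ℝ | ∃ j : Fin k → Fin n, StrictAnti j ∧
          r = ∏ l, |lam i / lam (j l) - 1| ^ 2} * (u i ⬝ᵥ (X *ᵥ βstar)) ^ 2 := by
    apply mul_nonneg
    · apply mul_nonneg (mul_nonneg (by positivity) (by positivity)) (sq_nonneg _)
    · refine Finset.sum_nonneg fun i _ => mul_nonneg ?_ (sq_nonneg _)
      apply Real.sSup_nonneg
      rintro x ⟨j, hj, rfl⟩
      exact Finset.prod_nonneg fun l _ => sq_nonneg _
  -- key arithmetic
  have hA : Real.log n / n ≤ Real.log n / ((n:ℝ)*L) * (1+ρ^(2*k)) * ((1/n)*S) := by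
    have hann : 0 ≤ Real.log n / ((n:ℝ)*L) := by positivity
    have h1 : Real.log n / ((n:ℝ)*L) * 1 * ((1/n)*((n:ℝ)*L))
        ≤ Real.log n / ((n:ℝ)*L) * (1+ρ^(2*k)) * ((1/n)*((n:ℝ)*L)) := by
      apply mul_le_mul_of_nonneg_right _ (by positivity)
      apply mul_le_mul_of_nonneg_left _ hann
      linarith
    have h1b : Real.log n / ((n:ℝ)*L) * (1+ρ^(2*k)) * ((1/n)*((n:ℝ)*L))
        ≤ Real.log n / ((n:ℝ)*L) * (1+ρ^(2*k)) * ((1/n)*S) := by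
      apply mul_le_mul_of_nonneg_left _ (by nlinarith [hann, ht_nn])
      apply mul_le_mul_of_nonneg_left hSL (by positivity)
    have h2 : Real.log n / ((n:ℝ)*L) * 1 * ((1/n)*((n:ℝ)*L)) = Real.log n / n := by
      rw [mul_one]
      field_simp
    linarith
  have hgoal : (1 / n : ℝ) * ∑ i, ((X *ᵥ βstar) i - (X *ᵥ βhat) i) ^ 2 ≤
      300 * ((ρ^(2*k) + Real.log n / ((n:ℝ) * L) * (1 + ρ^(2*k))) * ((1/n : ℝ)*S) +
        ((k : ℝ) ^ 2 / L) * (Real.log n / (n : ℝ) ^ 2) *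
          (1 + 2 * Real.sqrt (Real.log n / (n * L))) ^ 2 *
          ∑ i, sSup {r : ℝ | ∃ j : Fin k → Fin n, StrictAnti j ∧
              r = ∏ l, |lam i / lam (j l) - 1| ^ 2} * (u i ⬝ᵥ (X *ᵥ βstar)) ^ 2) := by
    have hL1 : (1 / n : ℝ) * ∑ i, ((X *ᵥ βstar) i - (X *ᵥ βhat) i) ^ 2
        ≤ (1/n : ℝ) * (18*Ne + 16*ρ^(2*k)*S) := by
      apply mul_le_mul_of_nonneg_left _ (by positivity)
      exact hkey
    have hL2 : (1/n : ℝ) * (18*Ne + 16*ρ^(2*k)*S)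
        ≤ 288 * (Real.log n / n) + 16 * (ρ^(2*k) * ((1/n)*S)) := by
      have : (1/n : ℝ) * (18*Ne + 16*ρ^(2*k)*S)
          = 18*Ne*(1/n) + 16 * (ρ^(2*k) * ((1/n)*S)) := by ring
      rw [this]
      have h18 : 18*Ne*(1/n : ℝ) ≤ 288 * (Real.log n / n) := by
        have hmul := mul_le_mul_of_nonneg_right hNeb (by positivity : (0:ℝ) ≤ 1/(n:ℝ))
        have hdiv : Real.log n / n = Real.log n * (1/n) := by ring
        rw [hdiv]
        nlinarith [hmul]
      linarith
    have hfirst : 288 * (Real.log n / n) + 16 * (ρ^(2*k) * ((1/n)*S))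
        ≤ 300 * ((ρ^(2*k) + Real.log n / ((n:ℝ) * L) * (1 + ρ^(2*k))) * ((1/n : ℝ)*S)) := by
      have hexpand : (ρ^(2*k) + Real.log n / ((n:ℝ) * L) * (1 + ρ^(2*k))) * ((1/n : ℝ)*S)
          = ρ^(2*k) * ((1/n)*S) + Real.log n / ((n:ℝ)*L) * (1+ρ^(2*k)) * ((1/n)*S) := by
        ring
      rw [hexpand]
      have hts : 0 ≤ ρ^(2*k) * ((1/n)*S) := mul_nonneg ht_nn (mul_nonneg (by positivity) hSnn)
      linarith [hA, hts, div_nonneg hlogn (le_of_lt hn0)]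
    linarith [hW, hL1, hL2, hfirst]
  exact hgoal
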